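/- Let B_1, ..., B_K ∈ M_n(ℂ) with {1,...,K} partitioned into groups G_1, ..., G_g satisfying B_iᴴ B_j + B_jᴴ B_i = 0 whenever i, j lie in different groups, and let the signal set be a Cartesian product 𝒜 = 𝒜_1 × ⋯ × 𝒜_g, where 𝒜_k prescribes the values of the variables indexed by G_k (g-group encodable code). Write S(x) = Σ_i x_i B_i and S_k(x_k) = Σ_{i∈G_k} x_i B_i. Then for any y, z ∈ ℂ^n and nonzero real a, a point x̂ = (x̂_1,...,x̂_g) ∈ 𝒜 minimizes ‖y − (1/a) S(x) z‖² over x ∈ 𝒜 if and only if for each k, x̂_k minimizes ‖y − (1/a) S_k(x_k) z‖² over x_k ∈ 𝒜_k. Hence the code is g-group decodable: the decoder can search each group independently. -/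

import Mathlib

open Matrix

namespace DDSTC

lemma pair_orth {n : ℕ} (M N : Matrix (Fin n) (Fin n) ℂ) (z : Fin n → ℂ)
    (h : Mᴴ * N + Nᴴ * M = 0) :
    (∑ t, M.mulVec z t * (starRingEnd ℂ) (N.mulVec z t)).re = 0 := by
  set c : ℂ := ∑ t, M.mulVec z t * (starRingEnd ℂ) (N.mulVec z t) with hcdef
  have hc : c = dotProduct (star (N.mulVec z)) (M.mulVec z) := by
    simp [dotProduct, hcdef, mul_comm, Pi.star_apply, RCLike.star_def]
  have hcc : (starRingEnd ℂ) c = dotProduct (star (M.mulVec z)) (N.mulVec z) := by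
    simp only [hcdef, map_sum, _root_.map_mul, Complex.conj_conj, dotProduct,
      Pi.star_apply, RCLike.star_def]
  have h1 : dotProduct (star (N.mulVec z)) (M.mulVec z)
      = dotProduct (Matrix.vecMul (star z) (Nᴴ * M)) z := by
    rw [Matrix.star_mulVec, Matrix.dotProduct_mulVec, Matrix.vecMul_vecMul]
  have h2 : dotProduct (star (M.mulVec z)) (N.mulVec z)
      = dotProduct (Matrix.vecMul (star z) (Mᴴ * N)) z := by
    rw [Matrix.star_mulVec, Matrix.dotProduct_mulVec, Matrix.vecMul_vecMul]
  have hsum : c + (starRingEnd ℂ) c = 0 := by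
    rw [hc] at hcc ⊢
    rw [hcc, h1, h2, ← add_dotProduct, ← Matrix.vecMul_add, add_comm (Nᴴ * M), h]
    simp
  have := Complex.add_conj c
  rw [hsum] at this
  have h2 : (2 * c.re : ℝ) = 0 := by exact_mod_cast this.symm
  linarith


lemma sum_orth {n : ℕ} {I J : Type*} [Fintype I] [Fintype J]
    (u : I → Fin n → ℂ) (v : J → Fin n → ℂ) (xu : I → ℝ) (xv : J → ℝ)
    (h : ∀ i j, (∑ t, u i t * (starRingEnd ℂ) (v j t)).re = 0) :
    (∑ t, (∑ i, (xu i : ℂ) • u i) t * (starRingEnd ℂ) ((∑ j, (xv j : ℂ) • v j) t)).re = 0 := by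
  have key : ∀ t : Fin n, ((∑ i, (xu i : ℂ) • u i) t * (starRingEnd ℂ) ((∑ j, (xv j : ℂ) • v j) t))
      = ∑ i, ∑ j, ((xu i * xv j : ℝ) : ℂ) * (u i t * (starRingEnd ℂ) (v j t)) := by
    intro t
    simp only [Finset.sum_apply, Pi.smul_apply, smul_eq_mul, map_sum, _root_.map_mul,
      Complex.conj_ofReal, Finset.sum_mul_sum, Complex.ofReal_mul]
    exact Finset.sum_congr rfl fun i _ => Finset.sum_congr rfl fun j _ => by ring
  simp only [key]
  rw [Finset.sum_comm]
  have h2 : ∀ i, ∑ t : Fin n, ∑ j, ((xu i * xv j : ℝ) : ℂ) * (u i t * (starRingEnd ℂ) (v j t))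
      = ∑ j, ((xu i * xv j : ℝ) : ℂ) * ∑ t, u i t * (starRingEnd ℂ) (v j t) := by
    intro i
    rw [Finset.sum_comm]
    exact Finset.sum_congr rfl fun j _ => (Finset.mul_sum _ _ _).symm
  simp only [h2, Complex.re_sum, Complex.re_ofReal_mul, h, mul_zero, Finset.sum_const_zero]

lemma exterm (b : ℝ) (Y C : ℂ) :
    ‖Y - (b : ℂ) * C‖ ^ 2 = Complex.normSq Y - 2 * b * (Y * (starRingEnd ℂ) C).re
      + b ^ 2 * (C * (starRingEnd ℂ) C).re := by
  have hre : (Y * (starRingEnd ℂ) ((b : ℂ) * C)).re = b * (Y * (starRingEnd ℂ) C).re := by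
    rw [_root_.map_mul, Complex.conj_ofReal,
      show Y * ((b : ℂ) * (starRingEnd ℂ) C) = (b : ℂ) * (Y * (starRingEnd ℂ) C) by ring,
      Complex.re_ofReal_mul]
  have hq : (C * (starRingEnd ℂ) C).re = Complex.normSq C := by
    rw [Complex.mul_conj, Complex.ofReal_re]
  rw [show ‖Y - (b : ℂ) * C‖ ^ 2 = Complex.normSq (Y - (b : ℂ) * C) by
      rw [Complex.sq_norm],
    Complex.normSq_sub, Complex.normSq_mul, Complex.normSq_ofReal, hre, hq]
  ring

lemma decomp {n g : ℕ} (y : Fin n → ℂ) (a : ℝ) (w : Fin g → Fin n → ℂ)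
    (horth : ∀ j k, j ≠ k → (∑ t, w j t * (starRingEnd ℂ) (w k t)).re = 0) :
    ∑ t, ‖y t - (a⁻¹ • ∑ k, w k) t‖ ^ 2
      = ∑ k, (∑ t, ‖y t - (a⁻¹ • w k) t‖ ^ 2) - ((g : ℝ) - 1) * ∑ t, ‖y t‖ ^ 2 := by
  have ex : ∀ c : Fin n → ℂ, ∑ t, ‖y t - (a⁻¹ • c) t‖ ^ 2
      = (∑ t, Complex.normSq (y t)) - 2 * a⁻¹ * (∑ t, y t * (starRingEnd ℂ) (c t)).re
        + a⁻¹ ^ 2 * (∑ t, c t * (starRingEnd ℂ) (c t)).re := by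
    intro c
    simp only [Pi.smul_apply, Complex.real_smul, exterm a⁻¹, Complex.re_sum]
    rw [Finset.sum_add_distrib, Finset.sum_sub_distrib, ← Finset.mul_sum, ← Finset.mul_sum]
  have Ladd : (∑ t, y t * (starRingEnd ℂ) ((∑ k, w k) t)).re
      = ∑ k, (∑ t, y t * (starRingEnd ℂ) (w k t)).re := by
    simp only [Finset.sum_apply, map_sum, Finset.mul_sum, Complex.re_sum]
    rw [Finset.sum_comm]
  have Q : (∑ t, (∑ k, w k) t * (starRingEnd ℂ) ((∑ k, w k) t)).re
      = ∑ k, (∑ t, w k t * (starRingEnd ℂ) (w k t)).re := by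
    have key : ∀ t, ((∑ k, w k) t * (starRingEnd ℂ) ((∑ k, w k) t))
        = ∑ j, ∑ k, w j t * (starRingEnd ℂ) (w k t) := by
      intro t
      simp only [Finset.sum_apply, map_sum, Finset.sum_mul_sum]
    simp only [key, Complex.re_sum]
    rw [Finset.sum_comm]
    refine Finset.sum_congr rfl fun j _ => ?_
    rw [Finset.sum_comm, Finset.sum_eq_single j]
    · intro k _ hk
      rw [← Complex.re_sum]
      exact horth j k (Ne.symm hk)
    · intro hj; exact absurd (Finset.mem_univ j) hj
  have hyn : ∀ t, ‖y t‖ ^ 2 = Complex.normSq (y t) := fun t => by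
    rw [Complex.sq_norm]
  simp only [ex, Ladd, Q, hyn]
  rw [Finset.sum_add_distrib, Finset.sum_sub_distrib, Finset.sum_const, Finset.card_univ,
    Fintype.card_fin, ← Finset.mul_sum, ← Finset.mul_sum, nsmul_eq_mul]
  ring


private noncomputable def Fk {n K g : ℕ} (B : Fin K → Matrix (Fin n) (Fin n) ℂ) (grp : Fin K → Fin g)
    (a : ℝ) (y z : Fin n → ℂ) (k : Fin g) (v : {i : Fin K // grp i = k} → ℝ) : ℝ :=
  ∑ t, ‖y t - (a⁻¹ • (∑ i : {i : Fin K // grp i = k}, (v i : ℂ) • B i.1).mulVec z) t‖ ^ 2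

/-- for a `g`-group encodable code (signal set a Cartesian product
`𝒜 = 𝒜_1 × ⋯ × 𝒜_g`, `𝒜_k` prescribing the variables of group `G_k`) whose weight
matrices satisfy the cross condition `B_iᴴ B_j + B_jᴴ B_i = 0` for `i, j` in different
groups, a point `x̂ ∈ 𝒜` minimizes `‖y - (1/a) S(x) z‖²` over `𝒜` iff for each `k` its
`k`-th component minimizes `‖y - (1/a) S_k(x_k) z‖²` over `𝒜_k`. -/
theorem stmt12 (n K g : ℕ) (B : Fin K → Matrix (Fin n) (Fin n) ℂ)
    (grp : Fin K → Fin g)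
    (hcross : ∀ i j : Fin K, grp i ≠ grp j → (B i)ᴴ * B j + (B j)ᴴ * B i = 0)
    (𝒜 : ∀ k : Fin g, Set ({i : Fin K // grp i = k} → ℝ))
    (a : ℝ) (ha : a ≠ 0) (y z : Fin n → ℂ) (xhat : Fin K → ℝ) :
    ((∀ k, (fun i : {i : Fin K // grp i = k} => xhat i.1) ∈ 𝒜 k) ∧
      ∀ x : Fin K → ℝ, (∀ k, (fun i : {i : Fin K // grp i = k} => x i.1) ∈ 𝒜 k) →
        ∑ t, ‖y t - (a⁻¹ • (∑ i, (xhat i : ℂ) • B i).mulVec z) t‖ ^ 2 ≤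
          ∑ t, ‖y t - (a⁻¹ • (∑ i, (x i : ℂ) • B i).mulVec z) t‖ ^ 2)
    ↔ (∀ k : Fin g,
        (fun i : {i : Fin K // grp i = k} => xhat i.1) ∈ 𝒜 k ∧
        ∀ v ∈ 𝒜 k,
          ∑ t, ‖y t -
              (a⁻¹ • (∑ i : {i : Fin K // grp i = k}, ((xhat i.1 : ℝ) : ℂ) • B i.1).mulVec z) t‖ ^ 2 ≤
            ∑ t, ‖y t -
              (a⁻¹ • (∑ i : {i : Fin K // grp i = k}, (v i : ℂ) • B i.1).mulVec z) t‖ ^ 2) := by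
  classical
  suffices H : ((∀ k, (fun i : {i : Fin K // grp i = k} => xhat i.1) ∈ 𝒜 k) ∧
      ∀ x : Fin K → ℝ, (∀ k, (fun i : {i : Fin K // grp i = k} => x i.1) ∈ 𝒜 k) →
        ∑ t, ‖y t - (a⁻¹ • (∑ i, (xhat i : ℂ) • B i).mulVec z) t‖ ^ 2 ≤
          ∑ t, ‖y t - (a⁻¹ • (∑ i, (x i : ℂ) • B i).mulVec z) t‖ ^ 2)
      ↔ (∀ k : Fin g,
        (fun i : {i : Fin K // grp i = k} => xhat i.1) ∈ 𝒜 k ∧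
        ∀ v ∈ 𝒜 k,
          Fk B grp a y z k (fun i => xhat i.1) ≤ Fk B grp a y z k v) by
    exact H
  have mv : ∀ {ι : Type} [Fintype ι] (M : ι → Matrix (Fin n) (Fin n) ℂ),
      (∑ i, M i).mulVec z = ∑ i, (M i).mulVec z := by
    intro ι _ M
    ext t
    simp only [Matrix.mulVec, dotProduct, Finset.sum_apply, Matrix.sum_apply,
      Finset.sum_mul]
    exact Finset.sum_comm
  have wve : ∀ (x : Fin K → ℝ) (k : Fin g),
      (∑ i : {i : Fin K // grp i = k}, (x i.1 : ℂ) • B i.1).mulVec z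
        = ∑ i : {i : Fin K // grp i = k}, (x i.1 : ℂ) • (B i.1).mulVec z := by
    intro x k
    rw [mv]
    exact Finset.sum_congr rfl fun i _ => Matrix.smul_mulVec _ _ _
  have horthx : ∀ x : Fin K → ℝ, ∀ j k : Fin g, j ≠ k →
      (∑ t, ((∑ i : {i : Fin K // grp i = j}, (x i.1 : ℂ) • B i.1).mulVec z) t *
        (starRingEnd ℂ) (((∑ i : {i : Fin K // grp i = k}, (x i.1 : ℂ) • B i.1).mulVec z) t)).re
        = 0 := by
    intro x j k hjk
    rw [wve x j, wve x k]
    exact sum_orth (fun i : {i : Fin K // grp i = j} => (B i.1).mulVec z)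
      (fun i : {i : Fin K // grp i = k} => (B i.1).mulVec z)
      (fun i => x i.1) (fun i => x i.1)
      (fun i i' => pair_orth _ _ z (hcross i.1 i'.1 (by rw [i.2, i'.2]; exact hjk)))
  have key : ∀ x : Fin K → ℝ,
      ∑ t, ‖y t - (a⁻¹ • (∑ i, (x i : ℂ) • B i).mulVec z) t‖ ^ 2
        = ∑ k, Fk B grp a y z k (fun i => x i.1)
            - ((g : ℝ) - 1) * ∑ t, ‖y t‖ ^ 2 := by
    intro x
    have hsplit : (∑ i, (x i : ℂ) • B i).mulVec z
        = ∑ k, (∑ i : {i : Fin K // grp i = k}, (x i.1 : ℂ) • B i.1).mulVec z := by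
      rw [← Fintype.sum_fiberwise grp (fun i => (x i : ℂ) • B i), mv]
    rw [hsplit]
    exact decomp y a _ (horthx x)
  constructor
  · rintro ⟨hmem, hmin⟩ k
    refine ⟨hmem k, fun v hv => ?_⟩
    set x' : Fin K → ℝ := fun i => if h : grp i = k then v ⟨i, h⟩ else xhat i with hx'
    have hres : ∀ k' : Fin g, k' ≠ k →
        (fun i : {i : Fin K // grp i = k'} => x' i.1) = (fun i => xhat i.1) := by
      intro k' hk'
      funext i
      simp only [hx']
      rw [dif_neg (by rw [i.2]; exact hk')]
    have hresk : (fun i : {i : Fin K // grp i = k} => x' i.1) = v := by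
      funext i
      obtain ⟨i, hi⟩ := i
      simp only [hx']
      rw [dif_pos hi]
    have hx'mem : ∀ k', (fun i : {i : Fin K // grp i = k'} => x' i.1) ∈ 𝒜 k' := by
      intro k'
      by_cases hk' : k' = k
      · subst hk'; rw [hresk]; exact hv
      · rw [hres k' hk']; exact hmem k'
    have h := hmin x' hx'mem
    rw [key xhat, key x'] at h
    have h2 : ∑ k', Fk B grp a y z k' (fun i => xhat i.1)
        ≤ ∑ k', Fk B grp a y z k' (fun i => x' i.1) := by linarith
    rw [← Finset.sum_erase_add _ _ (Finset.mem_univ k),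
      ← Finset.sum_erase_add _ _ (Finset.mem_univ k)] at h2
    have hEq : ∑ k' ∈ Finset.univ.erase k, Fk B grp a y z k' (fun i => xhat i.1)
        = ∑ k' ∈ Finset.univ.erase k, Fk B grp a y z k' (fun i => x' i.1) :=
      Finset.sum_congr rfl fun k' hk' =>
        congrArg (Fk B grp a y z k') (hres k' (Finset.ne_of_mem_erase hk')).symm
    rw [hEq] at h2
    have h3 := (add_le_add_iff_left _).mp h2
    rwa [hresk] at h3
  · intro h
    refine ⟨fun k => (h k).1, fun x hx => ?_⟩
    rw [key xhat, key x]
    apply sub_le_sub_right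
    exact Finset.sum_le_sum fun k _ => (h k).2 _ (hx k)


end DDSTC
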